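/- For every a = (a_1,…,a_d) ∈ ℕ^d and every x ∈ ℕ^d, the composite operator g^a := g_1^{a_1} ∘ ⋯ ∘ g_d^{a_d} satisfies n(g^a(x)) = n(x) + (a_1 + ⋯ + a_d) and W(g^a(x)) = W(x) + (0·a_1 + 1·a_2 + ⋯ + (d−1)·a_d). -/

import Mathlib

namespace Spiral

/-- The size `n(x) = n₁ + ⋯ + n_d` of a configuration `x ∈ ℕ^d`. -/
def size {d : ℕ} (x : Fin d → ℕ) : ℕ := ∑ i, x i

/-- The weight `W(x) = Σ_{i<j} (max(0, x_j − x_i) + max(0, x_i − x_j − 1))`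
(truncated ℕ-subtraction realizes the `max(0,·)`). -/
def weight {d : ℕ} (x : Fin d → ℕ) : ℕ :=
  ∑ i : Fin d, ∑ j : Fin d, if i < j then (x j - x i) + (x i - x j - 1) else 0

/-- The configuration `x` as a set of points of `[d] × ℕ`: the point `(i, n)` (seat `i`
0-indexed, level `n`) is encoded as the natural number `n*d + i`. The usual order on the
encodings is exactly the height order `≺` (height `h(i,n) = n + i/d`), and the spiral
shift `δ + s/d` is encoded as `+ s`. -/
def pts (d : ℕ) (x : Fin d → ℕ) : Finset ℕ :=
  Finset.image (fun i : Fin d => x i * d + i.val) Finset.univ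

/-- The points of `x` listed in increasing height order: `δ¹(x), …, δ^d(x)`. -/
def sortedPts (d : ℕ) (x : Fin d → ℕ) : List ℕ :=
  (pts d x).sort (· ≤ ·)

/-- The lowest point strictly above `p` (along the spiral) whose seat lies in `S`. -/
noncomputable def nextPt (d : ℕ) (S : Finset ℕ) (p : ℕ) : ℕ :=
  sInf {q : ℕ | p < q ∧ q % d ∈ S}

/-- The spiral shifting operator `g_j` (for `1 ≤ j ≤ d`): it fixes the lowest `j - 1`
points `δ¹(x), …, δ^{j-1}(x)` and moves each remaining point `δ^k(x)` (`k ≥ j`) to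
`δ^k(x) + s_k/d`, where `s_k` is the minimal positive integer such that the seat of
`δ^k(x) + s_k/d` lies in `{i(δ^j(x)), …, i(δ^d(x))}`. The resulting configuration is read
off from the new point set (which has exactly one point per seat). -/
noncomputable def gOp (d : ℕ) (j : ℕ) (x : Fin d → ℕ) : Fin d → ℕ := fun i =>
  let L := sortedPts d x
  let low := L.take (j - 1)
  let high := L.drop (j - 1)
  let S : Finset ℕ := high.toFinset.image (· % d)
  let Q : Finset ℕ := low.toFinset ∪ (high.map (nextPt d S)).toFinset
  ∑ q ∈ Q.filter (fun q => q % d = i.val), q / d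

/-- `g^a := g₁^{a₁} ∘ ⋯ ∘ g_d^{a_d}` (here `a i` is the exponent of `g_{i+1}`). -/
noncomputable def gIter (d : ℕ) (a : Fin d → ℕ) (x : Fin d → ℕ) : Fin d → ℕ :=
  (List.finRange d).foldr (fun j y => (gOp d (j.val + 1))^[a j] y) x

end Spiral


namespace SpiralAux
open Spiral Finset

variable {d : ℕ}

lemma enc_mod (x : Fin d → ℕ) (i : Fin d) : (x i * d + i.val) % d = i.val := by
  rw [mul_comm, Nat.mul_add_mod, Nat.mod_eq_of_lt i.isLt]

lemma enc_div (x : Fin d → ℕ) (i : Fin d) : (x i * d + i.val) / d = x i := by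
  have hd : 0 < d := i.pos
  rw [mul_comm, Nat.mul_add_div hd, Nat.div_eq_of_lt i.isLt, add_zero]

lemma enc_injOn (x : Fin d → ℕ) : ∀ i ∈ univ, ∀ j ∈ univ,
    (x i * d + i.val) = (x j * d + j.val) → i = j := by
  intro i _ j _ h
  have := congrArg (· % d) h
  simp only [enc_mod] at this
  exact Fin.ext this

lemma mem_pts {x : Fin d → ℕ} {q : ℕ} : q ∈ pts d x ↔ ∃ i : Fin d, x i * d + i.val = q := by
  simp [pts]

lemma pts_mod_lt {x : Fin d → ℕ} {q : ℕ} (hq : q ∈ pts d x) : q % d < d := by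
  obtain ⟨i, rfl⟩ := mem_pts.1 hq
  rw [enc_mod]; exact i.isLt

lemma pts_mod_inj {x : Fin d → ℕ} {p q : ℕ} (hp : p ∈ pts d x) (hq : q ∈ pts d x)
    (h : p % d = q % d) : p = q := by
  obtain ⟨i, rfl⟩ := mem_pts.1 hp
  obtain ⟨j, rfl⟩ := mem_pts.1 hq
  rw [enc_mod, enc_mod] at h
  have : i = j := Fin.ext h
  subst this; rfl

lemma exists_pts_mod {x : Fin d → ℕ} {r : ℕ} (hr : r < d) : ∃ q ∈ pts d x, q % d = r :=
  ⟨x ⟨r, hr⟩ * d + r, mem_pts.2 ⟨⟨r, hr⟩, rfl⟩, by simpa using enc_mod x ⟨r, hr⟩⟩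

lemma card_pts (x : Fin d → ℕ) : (pts d x).card = d := by
  rw [pts, Finset.card_image_of_injOn (fun i _ j _ h => enc_injOn x i (mem_univ i) j (mem_univ j) h),
    card_univ, Fintype.card_fin]

def sizeSet (d : ℕ) (Q : Finset ℕ) : ℕ := ∑ q ∈ Q, q / d

def wSet (d : ℕ) (Q : Finset ℕ) : ℕ := ∑ p ∈ Q, ∑ q ∈ Q, if p < q then (q - p) / d else 0

lemma size_eq (x : Fin d → ℕ) : size x = sizeSet d (pts d x) := by
  rw [sizeSet, pts, Finset.sum_image (enc_injOn x)]
  exact (Finset.sum_congr rfl fun i _ => (enc_div x i).symm)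


end SpiralAux

namespace SpiralAux
open Spiral Finset
variable {d : ℕ}

lemma pair_term {x : Fin d → ℕ} {i j : Fin d} (hij : i < j) :
    (x j - x i) + (x i - x j - 1)
      = (if (x i * d + i.val) < (x j * d + j.val) then (x j * d + j.val - (x i * d + i.val)) / d else 0)
      + (if (x j * d + j.val) < (x i * d + i.val) then (x i * d + i.val - (x j * d + j.val)) / d else 0) := by
  have hd0 : 0 < d := i.pos
  have hij' : i.val < j.val := hij
  have hj : j.val < d := j.isLt
  rcases lt_trichotomy (x i * d + i.val) (x j * d + j.val) with h | h | h
  · have hx : x i ≤ x j := by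
      by_contra hx
      push_neg at hx
      have h1 : (x j + 1) * d ≤ x i * d := Nat.mul_le_mul_right d hx
      have h2 : (x j + 1) * d = x j * d + d := by ring
      omega
    obtain ⟨k, hk⟩ : ∃ k, x j = x i + k := ⟨x j - x i, by omega⟩
    have hexp : x j * d = x i * d + d * k := by rw [hk]; ring
    have hsub : x j * d + j.val - (x i * d + i.val) = d * k + (j.val - i.val) := by omega
    rw [if_pos h, if_neg (not_lt.2 h.le), hsub, Nat.mul_add_div hd0,
      Nat.div_eq_of_lt (by omega), add_zero]
    omega
  · exfalso
    have h2 : i.val = j.val := by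
      have h' := congrArg (· % d) h
      simpa only [enc_mod] using h'
    omega
  · have hx : x j < x i := by
      by_contra hx
      push_neg at hx
      have h1 : x i * d ≤ x j * d := Nat.mul_le_mul_right d hx
      omega
    obtain ⟨k, hk⟩ : ∃ k, x i = x j + (k + 1) := ⟨x i - x j - 1, by omega⟩
    have hexp : x i * d = x j * d + d * k + d := by rw [hk]; ring
    have hsub : x i * d + i.val - (x j * d + j.val) = d * k + (d - (j.val - i.val)) := by omega
    rw [if_neg (not_lt.2 h.le), if_pos h, hsub, Nat.mul_add_div hd0,
      Nat.div_eq_of_lt (by omega), add_zero, zero_add]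
    omega

lemma weight_eq (x : Fin d → ℕ) : weight x = wSet d (pts d x) := by
  rw [wSet, pts, Finset.sum_image (enc_injOn x)]
  rw [Finset.sum_congr rfl fun i (_ : i ∈ univ) => Finset.sum_image (enc_injOn x)]
  set e : Fin d → ℕ := fun i => x i * d + i.val with he
  set F : Fin d → Fin d → ℕ := fun i j => if e i < e j then (e j - e i) / d else 0 with hF
  have split : ∀ i j : Fin d,
      F i j = (if i < j then F i j else 0) + (if j < i then F i j else 0) := by
    intro i j
    rcases lt_trichotomy i j with h | h | h
    · rw [if_pos h, if_neg (asymm h), add_zero]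
    · subst h
      simp [hF]
    · rw [if_neg (asymm h), if_pos h, zero_add]
  have rhs : ∑ i : Fin d, ∑ j : Fin d, F i j
      = (∑ i : Fin d, ∑ j : Fin d, if i < j then F i j else 0)
      + (∑ i : Fin d, ∑ j : Fin d, if i < j then F j i else 0) := by
    have h1 : ∑ i : Fin d, ∑ j : Fin d, F i j
        = (∑ i : Fin d, ∑ j : Fin d, if i < j then F i j else 0)
        + (∑ i : Fin d, ∑ j : Fin d, if j < i then F i j else 0) := by
      rw [← Finset.sum_add_distrib]
      refine Finset.sum_congr rfl fun i _ => ?_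
      rw [← Finset.sum_add_distrib]
      exact Finset.sum_congr rfl fun j _ => split i j
    rw [h1, Finset.sum_comm (f := fun i j => if j < i then F i j else 0)]
  have lhs : ∀ i j : Fin d, (if i < j then (x j - x i) + (x i - x j - 1) else 0)
      = (if i < j then F i j else 0) + (if i < j then F j i else 0) := by
    intro i j
    by_cases h : i < j
    · rw [if_pos h, if_pos h, if_pos h, pair_term h]
    · simp [h]
  rw [weight, rhs]
  rw [← Finset.sum_add_distrib]
  refine Finset.sum_congr rfl fun i _ => ?_
  rw [← Finset.sum_add_distrib]
  exact Finset.sum_congr rfl fun j _ => lhs i j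


/-- Enumeration of `{q : ℕ | q % d ∈ S}` in increasing order. -/
def cseq (d : ℕ) (S : Finset ℕ) (t : ℕ) : ℕ :=
  d * (t / S.card) + (S.sort (· ≤ ·)).getD (t % S.card) 0

section Cseq

variable {d : ℕ} {S : Finset ℕ}

lemma m_pos (hS : S.Nonempty) : 0 < S.card := Finset.card_pos.2 hS

lemma d_pos (hS : S.Nonempty) (hSd : ∀ r ∈ S, r < d) : 0 < d := by
  obtain ⟨r, hr⟩ := hS
  exact Nat.lt_of_le_of_lt (Nat.zero_le r) (hSd r hr)

lemma sl_len : (S.sort (· ≤ ·)).length = S.card := Finset.length_sort _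

lemma cseq_eq (hS : S.Nonempty) (t : ℕ) :
    cseq d S t = d * (t / S.card) + (S.sort (· ≤ ·)).get ⟨t % S.card, by
      rw [sl_len]; exact Nat.mod_lt _ (m_pos hS)⟩ := by
  rw [cseq, List.getD_eq_getElem _ _ (by rw [sl_len]; exact Nat.mod_lt _ (m_pos hS))]
  rfl

lemma sl_lt_d (hSd : ∀ r ∈ S, r < d) (k : ℕ) (hk : k < (S.sort (· ≤ ·)).length) :
    (S.sort (· ≤ ·)).get ⟨k, hk⟩ < d :=
  hSd _ ((Finset.mem_sort _).1 (List.get_mem _ _))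

lemma cseq_mod (hS : S.Nonempty) (hSd : ∀ r ∈ S, r < d) (t : ℕ) :
    cseq d S t % d = (S.sort (· ≤ ·)).get
      ⟨t % S.card, by rw [sl_len]; exact Nat.mod_lt _ (m_pos hS)⟩ := by
  rw [cseq_eq hS, Nat.mul_add_mod, Nat.mod_eq_of_lt (sl_lt_d hSd _ _)]

lemma cseq_mod_mem (hS : S.Nonempty) (hSd : ∀ r ∈ S, r < d) (t : ℕ) :
    cseq d S t % d ∈ S := by
  rw [cseq_mod hS hSd]
  exact (Finset.mem_sort _).1 (List.get_mem _ _)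

lemma cseq_period (hS : S.Nonempty) (t : ℕ) : cseq d S (t + S.card) = cseq d S t + d := by
  rw [cseq, cseq, Nat.add_div_right _ (m_pos hS), Nat.add_mod_right]
  ring

lemma cseq_lt_succ (hS : S.Nonempty) (hSd : ∀ r ∈ S, r < d) (t : ℕ) :
    cseq d S t < cseq d S (t + 1) := by
  have hm : 0 < S.card := m_pos hS
  have hdm0 := Nat.div_add_mod t S.card
  have hmlt := Nat.mod_lt t hm
  rcases Nat.lt_or_ge (t % S.card + 1) S.card with h | h
  · have hdm : (t + 1) / S.card = t / S.card ∧ (t + 1) % S.card = t % S.card + 1 :=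
      (Nat.div_mod_unique hm).2 ⟨by omega, h⟩
    rw [cseq_eq hS, cseq_eq hS]
    simp only [hdm.1, hdm.2]
    have hlt : (S.sort (· ≤ ·)).get ⟨t % S.card, by rw [sl_len]; exact Nat.mod_lt _ hm⟩
        < (S.sort (· ≤ ·)).get ⟨t % S.card + 1, by rw [sl_len]; exact h⟩ :=
      (Finset.sortedLT_sort S).strictMono_get (by simp [Fin.mk_lt_mk])
    exact Nat.add_lt_add_left hlt _
  · have hmul : S.card * (t / S.card + 1) = S.card * (t / S.card) + S.card := by ring
    have hdm : (t + 1) / S.card = t / S.card + 1 ∧ (t + 1) % S.card = 0 :=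
      (Nat.div_mod_unique hm).2 ⟨by omega, hm⟩
    rw [cseq_eq hS, cseq_eq hS]
    simp only [hdm.1, hdm.2]
    have h1 : (S.sort (· ≤ ·)).get ⟨t % S.card, by rw [sl_len]; exact Nat.mod_lt _ hm⟩ < d :=
      sl_lt_d hSd _ _
    have h2 : d * (t / S.card + 1) = d * (t / S.card) + d := by ring
    omega

lemma cseq_strictMono (hS : S.Nonempty) (hSd : ∀ r ∈ S, r < d) : StrictMono (cseq d S) :=
  strictMono_nat_of_lt_succ (cseq_lt_succ hS hSd)

lemma cseq_surj (hS : S.Nonempty) {q : ℕ} (hq : q % d ∈ S) : ∃ t, cseq d S t = q := by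
  have hm := m_pos hS
  have hqs : q % d ∈ S.sort (· ≤ ·) := (Finset.mem_sort _).2 hq
  have hklt : (S.sort (· ≤ ·)).idxOf (q % d) < (S.sort (· ≤ ·)).length :=
    List.idxOf_lt_length_iff.2 hqs
  set k := (S.sort (· ≤ ·)).idxOf (q % d) with hk
  have hkm : k < S.card := by rwa [sl_len] at hklt
  refine ⟨q / d * S.card + k, ?_⟩
  have h1 : (q / d * S.card + k) / S.card = q / d := by
    rw [mul_comm, Nat.mul_add_div hm, Nat.div_eq_of_lt hkm, add_zero]
  have h2 : (q / d * S.card + k) % S.card = k := by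
    rw [mul_comm, Nat.mul_add_mod, Nat.mod_eq_of_lt hkm]
  rw [cseq_eq hS]
  simp only [h1, h2]
  have h3 : (S.sort (· ≤ ·)).get ⟨k, by rw [sl_len]; exact hkm⟩ = q % d := by
    rw [List.get_eq_getElem]
    exact List.getElem_idxOf hklt
  rw [h3]
  exact Nat.div_add_mod q d

lemma cseq_add_mul (hS : S.Nonempty) (t k : ℕ) :
    cseq d S (t + k * S.card) = cseq d S t + k * d := by
  induction k with
  | zero => simp
  | succ n ih =>
      have h : t + (n + 1) * S.card = (t + n * S.card) + S.card := by ring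
      rw [h, cseq_period hS, ih]
      ring

lemma cseq_gap_mod (hS : S.Nonempty) (t : ℕ) :
    cseq d S (t + 1) - cseq d S t
      = cseq d S (t % S.card + 1) - cseq d S (t % S.card) := by
  have hdm := Nat.div_add_mod t S.card
  have hmc : (t / S.card) * S.card = S.card * (t / S.card) := mul_comm _ _
  have e1 := cseq_add_mul (d := d) hS (t % S.card + 1) (t / S.card)
  have e2 := cseq_add_mul (d := d) hS (t % S.card) (t / S.card)
  have h1 : t % S.card + (t / S.card) * S.card = t := by omega
  have h2 : t % S.card + 1 + (t / S.card) * S.card = t + 1 := by omega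
  rw [h1] at e2
  rw [h2] at e1
  omega

lemma cseq_telescope (hS : S.Nonempty) (hSd : ∀ r ∈ S, r < d) (n : ℕ) :
    ∑ k ∈ Finset.range n, (cseq d S (k + 1) - cseq d S k) = cseq d S n - cseq d S 0 := by
  induction n with
  | zero => simp
  | succ n ih =>
      rw [Finset.sum_range_succ, ih]
      have h1 : cseq d S 0 ≤ cseq d S n := (cseq_strictMono hS hSd).monotone (Nat.zero_le n)
      have h2 : cseq d S n ≤ cseq d S (n + 1) := (cseq_lt_succ hS hSd n).le
      omega

lemma cseq_gap_sum (hS : S.Nonempty) (hSd : ∀ r ∈ S, r < d) :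
    ∑ k ∈ Finset.range S.card, (cseq d S (k + 1) - cseq d S k) = d := by
  rw [cseq_telescope hS hSd]
  have h := cseq_period (d := d) hS 0
  rw [zero_add] at h
  have hle : cseq d S 0 ≤ cseq d S S.card :=
    (cseq_strictMono hS hSd).monotone (Nat.zero_le _)
  omega

lemma cseq_gap_le (hS : S.Nonempty) (hSd : ∀ r ∈ S, r < d) (t : ℕ) :
    cseq d S (t + 1) - cseq d S t ≤ d := by
  have h1 : cseq d S (t + 1) ≤ cseq d S (t + S.card) :=
    (cseq_strictMono hS hSd).monotone (by have := m_pos hS; omega)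
  rw [cseq_period hS] at h1
  omega

lemma cseq_div_diff (hS : S.Nonempty) (hSd : ∀ r ∈ S, r < d) {t u : ℕ} (htu : t ≤ u) :
    (cseq d S u - cseq d S t) / d = (u - t) / S.card := by
  have hm := m_pos hS
  have hd := d_pos hS hSd
  obtain ⟨w, rfl⟩ : ∃ w, u = t + w := ⟨u - t, by omega⟩
  have hdm := Nat.div_add_mod w S.card
  have hmc : (w / S.card) * S.card = S.card * (w / S.card) := mul_comm _ _
  have e1 := cseq_add_mul (d := d) hS (t + w % S.card) (w / S.card)
  have h2 : t + w % S.card + (w / S.card) * S.card = t + w := by omega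
  rw [h2] at e1
  have hmlt := Nat.mod_lt w hm
  have hlt : cseq d S (t + w % S.card) - cseq d S t < d := by
    have ha : cseq d S (t + w % S.card) ≤ cseq d S (t + (S.card - 1)) :=
      (cseq_strictMono hS hSd).monotone (by omega)
    have hb : cseq d S (t + (S.card - 1)) < cseq d S (t + S.card) :=
      cseq_strictMono hS hSd (by omega)
    have hc := cseq_period (d := d) hS t
    omega
  have hle : cseq d S t ≤ cseq d S (t + w % S.card) :=
    (cseq_strictMono hS hSd).monotone (by omega)
  have h3 : cseq d S (t + w) - cseq d S t
      = d * (w / S.card) + (cseq d S (t + w % S.card) - cseq d S t) := by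
    have := mul_comm (w / S.card) d
    omega
  rw [h3, Nat.mul_add_div hd, Nat.div_eq_of_lt hlt, add_zero]
  congr 1
  omega

lemma cseq_mod_inj (hS : S.Nonempty) (hSd : ∀ r ∈ S, r < d) {t u : ℕ}
    (h : cseq d S t % d = cseq d S u % d) : t % S.card = u % S.card := by
  rw [cseq_mod hS hSd, cseq_mod hS hSd] at h
  simp only [List.get_eq_getElem] at h
  exact ((Finset.sort_nodup _ _).getElem_inj_iff).1 h

lemma cseq_mod_eq_of_mod (hS : S.Nonempty) (hSd : ∀ r ∈ S, r < d) {t u : ℕ}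
    (h : t % S.card = u % S.card) : cseq d S t % d = cseq d S u % d := by
  rw [cseq_mod hS hSd, cseq_mod hS hSd]
  exact congrArg _ (Fin.ext h)

lemma cseq_sInf (hS : S.Nonempty) (hSd : ∀ r ∈ S, r < d) (t : ℕ) :
    sInf {q : ℕ | cseq d S t < q ∧ q % d ∈ S} = cseq d S (t + 1) := by
  apply IsLeast.csInf_eq
  constructor
  · exact ⟨cseq_lt_succ hS hSd t, cseq_mod_mem hS hSd (t + 1)⟩
  · rintro q ⟨hq1, hq2⟩
    obtain ⟨u, rfl⟩ := cseq_surj hS hq2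
    have htu : t < u := by
      by_contra hc
      push_neg at hc
      exact absurd ((cseq_strictMono hS hSd).monotone hc) (not_le.2 hq1)
    exact (cseq_strictMono hS hSd).monotone (by omega)

end Cseq


lemma pts_mod_image {d : ℕ} (hd : 0 < d) (x : Fin d → ℕ) :
    (pts d x).image (· % d) = Finset.range d := by
  apply Finset.eq_of_subset_of_card_le
  · intro r hr
    obtain ⟨q, hq, rfl⟩ := Finset.mem_image.1 hr
    exact Finset.mem_range.2 (Nat.mod_lt _ hd)
  · rw [Finset.card_range,
      Finset.card_image_of_injOn (fun p hp q hq h => pts_mod_inj hp hq h), card_pts]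

section General
open Finset
variable {d : ℕ}

lemma sizeSet_mul (hd : 0 < d) {Q : Finset ℕ}
    (hinj : ∀ p ∈ Q, ∀ q ∈ Q, p % d = q % d → p = q)
    (himg : Q.image (· % d) = Finset.range d) :
    d * sizeSet d Q + ∑ r ∈ Finset.range d, r = ∑ q ∈ Q, q := by
  have h1 : ∑ r ∈ Finset.range d, r = ∑ q ∈ Q, q % d := by
    rw [← himg, Finset.sum_image hinj]
  rw [sizeSet, Finset.mul_sum, h1, ← Finset.sum_add_distrib]
  refine Finset.sum_congr rfl fun q _ => ?_
  have := Nat.div_add_mod q d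
  omega

lemma wSet_union_of_lt {A B : Finset ℕ} (hAB : ∀ a ∈ A, ∀ b ∈ B, a < b) :
    wSet d (A ∪ B) = wSet d A + wSet d B + ∑ a ∈ A, ∑ b ∈ B, (b - a) / d := by
  have hdisj : Disjoint A B := by
    rw [Finset.disjoint_left]
    intro a ha hb
    exact lt_irrefl a (hAB a ha a hb)
  rw [wSet, Finset.sum_union hdisj]
  have hsplit : ∀ p : ℕ, (∑ q ∈ A ∪ B, if p < q then (q - p) / d else 0)
      = (∑ q ∈ A, if p < q then (q - p) / d else 0)
      + (∑ q ∈ B, if p < q then (q - p) / d else 0) := fun p => Finset.sum_union hdisj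
  have h1 : ∑ p ∈ A, ∑ q ∈ A ∪ B, (if p < q then (q - p) / d else 0)
      = wSet d A + ∑ a ∈ A, ∑ b ∈ B, (b - a) / d := by
    rw [wSet, ← Finset.sum_add_distrib]
    refine Finset.sum_congr rfl fun p hp => ?_
    rw [hsplit p]
    congr 1
    exact Finset.sum_congr rfl fun q hq => if_pos (hAB p hp q hq)
  have h2 : ∑ p ∈ B, ∑ q ∈ A ∪ B, (if p < q then (q - p) / d else 0) = wSet d B := by
    rw [wSet]
    refine Finset.sum_congr rfl fun p hp => ?_
    rw [hsplit p]
    have hz : (∑ q ∈ A, if p < q then (q - p) / d else 0) = 0 :=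
      Finset.sum_eq_zero fun q hq => if_neg (not_lt.2 (hAB q hq p hp).le)
    omega
  rw [h1, h2]
  ring

end General


section Core
open Finset

theorem gOp_spec (d : ℕ) (x : Fin d → ℕ) (j : ℕ) (hj1 : 1 ≤ j) (hjd : j ≤ d) :
    size (gOp d j x) = size x + 1 ∧ weight (gOp d j x) = weight x + (j - 1) := by
  classical
  have hd : 0 < d := by omega
  set L : List ℕ := sortedPts d x with hLdef
  have hLsort : L.Pairwise (· < ·) := (Finset.sortedLT_sort _).pairwise
  have hLnd : L.Nodup := Finset.sort_nodup _ _
  have hLfin : L.toFinset = pts d x := Finset.sort_toFinset _ _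
  have hLlen : L.length = d := by rw [hLdef, sortedPts, Finset.length_sort, card_pts]
  set low : List ℕ := L.take (j - 1) with hlowdef
  set high : List ℕ := L.drop (j - 1) with hhighdef
  have happ : low ++ high = L := List.take_append_drop _ _
  have hmemL : ∀ b ∈ L, b ∈ pts d x := fun b hb => by
    rw [← hLfin]; exact List.mem_toFinset.2 hb
  have hmemlow : ∀ b ∈ low, b ∈ pts d x := fun b hb =>
    hmemL b (by rw [← happ]; exact List.mem_append_left _ hb)
  have hmemhigh : ∀ b ∈ high, b ∈ pts d x := fun b hb =>
    hmemL b (by rw [← happ]; exact List.mem_append_right _ hb)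
  have hlowlen : low.length = j - 1 := by rw [hlowdef, List.length_take, hLlen]; omega
  have hhighlen : high.length = d - (j - 1) := by rw [hhighdef, List.length_drop, hLlen]
  have hpair : List.Pairwise (· < ·) (low ++ high) := by rw [happ]; exact hLsort
  have hAB : ∀ a ∈ low, ∀ b ∈ high, a < b := (List.pairwise_append.1 hpair).2.2
  have hnodapp : (low ++ high).Nodup := by rw [happ]; exact hLnd
  have hlownd : low.Nodup := (List.nodup_append.1 hnodapp).1
  have hhighnd : high.Nodup := (List.nodup_append.1 hnodapp).2.1
  have hhighne : high ≠ [] := by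
    intro h
    rw [h] at hhighlen
    simp at hhighlen
    omega
  set S : Finset ℕ := high.toFinset.image (· % d) with hSdef
  have hSne : S.Nonempty := by
    obtain ⟨b, hb⟩ := List.exists_mem_of_ne_nil high hhighne
    exact ⟨b % d, Finset.mem_image.2 ⟨b, List.mem_toFinset.2 hb, rfl⟩⟩
  have hSd : ∀ r ∈ S, r < d := by
    intro r hr
    obtain ⟨b, hb, rfl⟩ := Finset.mem_image.1 hr
    exact pts_mod_lt (hmemhigh b (List.mem_toFinset.1 hb))
  have hmodS : ∀ b ∈ high, b % d ∈ S := fun b hb =>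
    Finset.mem_image.2 ⟨b, List.mem_toFinset.2 hb, rfl⟩
  have hSsurj : ∀ r ∈ S, ∃ b ∈ high, b % d = r := by
    intro r hr
    obtain ⟨b, hb, rfl⟩ := Finset.mem_image.1 hr
    exact ⟨b, List.mem_toFinset.1 hb, rfl⟩
  have hidx0 : ∀ b : ℕ, ∃ t, b ∈ high → cseq d S t = b := by
    intro b
    by_cases hb : b ∈ high
    · obtain ⟨t, ht⟩ := cseq_surj hSne (hmodS b hb)
      exact ⟨t, fun _ => ht⟩
    · exact ⟨0, fun h => absurd h hb⟩
  choose tIdx htIdx using hidx0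
  have hmono := cseq_strictMono hSne hSd
  have hBmodinj : ∀ b ∈ high, ∀ b' ∈ high, b % d = b' % d → b = b' := fun b hb b' hb' h =>
    pts_mod_inj (hmemhigh b hb) (hmemhigh b' hb') h
  have htmodinj : ∀ b ∈ high, ∀ b' ∈ high, tIdx b % S.card = tIdx b' % S.card → b = b' := by
    intro b hb b' hb' h
    have h2 : cseq d S (tIdx b) % d = cseq d S (tIdx b') % d := cseq_mod_eq_of_mod hSne hSd h
    rw [htIdx b hb, htIdx b' hb'] at h2
    exact hBmodinj b hb b' hb' h2
  have horder : ∀ b ∈ high, ∀ b' ∈ high, (tIdx b < tIdx b' ↔ b < b') := by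
    intro b hb b' hb'
    have h := hmono.lt_iff_lt (a := tIdx b) (b := tIdx b')
    rw [htIdx b hb, htIdx b' hb'] at h
    exact h.symm
  have hnext : ∀ b ∈ high, nextPt d S b = cseq d S (tIdx b + 1) := by
    intro b hb
    have h := cseq_sInf hSne hSd (tIdx b)
    simp only [htIdx b hb] at h
    exact h
  set gap : ℕ → ℕ := fun b => cseq d S (tIdx b + 1) - cseq d S (tIdx b) with hgapdef
  have hgap1 : ∀ b ∈ high, 1 ≤ gap b := by
    intro b hb
    have := cseq_lt_succ hSne hSd (tIdx b)
    simp only [hgapdef]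
    omega
  have hgapd : ∀ b ∈ high, gap b ≤ d := fun b _ => cseq_gap_le hSne hSd (tIdx b)
  have hnextgap : ∀ b ∈ high, nextPt d S b = b + gap b := by
    intro b hb
    have h1 := cseq_lt_succ hSne hSd (tIdx b)
    have h2 := htIdx b hb
    have h3 := hnext b hb
    simp only [hgapdef]
    omega
  set B : Finset ℕ := high.toFinset with hBdef
  have hBcard : B.card = d - (j - 1) := by
    rw [hBdef, List.toFinset_card_of_nodup hhighnd, hhighlen]
  have hScard : S.card = d - (j - 1) := by
    rw [hSdef, Finset.card_image_of_injOn (fun p hp q hq h =>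
      hBmodinj p (List.mem_toFinset.1 hp) q (List.mem_toFinset.1 hq) h),
      List.toFinset_card_of_nodup hhighnd, hhighlen]
  set N : Finset ℕ := B.image (nextPt d S) with hNdef
  have hmapfin : (high.map (nextPt d S)).toFinset = N := by
    ext q
    simp [hNdef, hBdef]
  set Q : Finset ℕ := low.toFinset ∪ (high.map (nextPt d S)).toFinset with hQdef
  have hQeq : Q = low.toFinset ∪ N := by rw [hQdef, hmapfin]
  have hlowltN : ∀ a ∈ low.toFinset, ∀ n ∈ N, a < n := by
    intro a ha n hn
    obtain ⟨b, hb, rfl⟩ := Finset.mem_image.1 hn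
    have hbh : b ∈ high := List.mem_toFinset.1 hb
    have h1 := hAB a (List.mem_toFinset.1 ha) b hbh
    have h2 := hnextgap b hbh
    have h3 := hgap1 b hbh
    omega
  have hNmod : ∀ n ∈ N, n % d ∈ S := by
    intro n hn
    obtain ⟨b, hb, rfl⟩ := Finset.mem_image.1 hn
    rw [hnext b (List.mem_toFinset.1 hb)]
    exact cseq_mod_mem hSne hSd _
  have hNmodinj : ∀ n ∈ N, ∀ n' ∈ N, n % d = n' % d → n = n' := by
    intro n hn n' hn' h
    obtain ⟨b, hb, rfl⟩ := Finset.mem_image.1 hn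
    obtain ⟨b', hb', rfl⟩ := Finset.mem_image.1 hn'
    have hbh := List.mem_toFinset.1 hb
    have hbh' := List.mem_toFinset.1 hb'
    rw [hnext b hbh, hnext b' hbh'] at h ⊢
    have hmm : (tIdx b + 1) % S.card = (tIdx b' + 1) % S.card := cseq_mod_inj hSne hSd h
    have hmm2 : tIdx b % S.card = tIdx b' % S.card := Nat.ModEq.add_right_cancel' 1 hmm
    rw [htmodinj b hbh b' hbh' hmm2]
  have hlowmodnS : ∀ a ∈ low, a % d ∉ S := by
    intro a ha hmem
    obtain ⟨b, hb, hbd⟩ := hSsurj _ hmem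
    have heq : a = b := pts_mod_inj (hmemlow a ha) (hmemhigh b hb) hbd.symm
    have := hAB a ha b hb
    omega
  have hQmodinj : ∀ p ∈ Q, ∀ q ∈ Q, p % d = q % d → p = q := by
    intro p hp q hq h
    rw [hQeq, Finset.mem_union] at hp hq
    rcases hp with hp | hp <;> rcases hq with hq | hq
    · exact pts_mod_inj (hmemlow p (List.mem_toFinset.1 hp))
        (hmemlow q (List.mem_toFinset.1 hq)) h
    · exact absurd (h ▸ hNmod q hq) (hlowmodnS p (List.mem_toFinset.1 hp))
    · exact absurd (h ▸ hNmod p hp) (hlowmodnS q (List.mem_toFinset.1 hq))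
    · exact hNmodinj p hp q hq h
  have hnextinj : ∀ p ∈ B, ∀ q ∈ B, nextPt d S p = nextPt d S q → p = q := by
    intro p hp q hq h
    have hph := List.mem_toFinset.1 hp
    have hqh := List.mem_toFinset.1 hq
    rw [hnext p hph, hnext q hqh] at h
    have h1 := hmono.injective h
    have h2 : tIdx p = tIdx q := by omega
    rw [← htIdx p hph, ← htIdx q hqh, h2]
  have hNcard : N.card = d - (j - 1) := by
    rw [hNdef, Finset.card_image_of_injOn (fun p hp q hq h => hnextinj p hp q hq h), hBcard]
  have hdisjQ : Disjoint low.toFinset N := by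
    rw [Finset.disjoint_left]
    intro a ha hN
    exact lt_irrefl a (hlowltN a ha a hN)
  have hlowcard : low.toFinset.card = j - 1 := by
    rw [List.toFinset_card_of_nodup hlownd, hlowlen]
  have hQcard : Q.card = d := by
    rw [hQeq, Finset.card_union_of_disjoint hdisjQ, hlowcard, hNcard]
    omega
  have hQimg : Q.image (· % d) = Finset.range d := by
    apply Finset.eq_of_subset_of_card_le
    · intro r hr
      obtain ⟨q, hq, rfl⟩ := Finset.mem_image.1 hr
      exact Finset.mem_range.2 (Nat.mod_lt _ hd)
    · rw [Finset.card_range,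
        Finset.card_image_of_injOn (fun p hp q hq h => hQmodinj p hp q hq h), hQcard]
  have hgval : ∀ (i : Fin d) (q : ℕ), q ∈ Q → q % d = i.val → gOp d j x i = q / d := by
    intro i q hq hqi
    have hfilter : Q.filter (fun p => p % d = i.val) = {q} := by
      ext p
      simp only [Finset.mem_filter, Finset.mem_singleton]
      constructor
      · rintro ⟨hp, hpi⟩
        exact hQmodinj p hp q hq (by rw [hpi, hqi])
      · rintro rfl
        exact ⟨hq, hqi⟩
    show (∑ p ∈ Q.filter (fun p => p % d = i.val), p / d) = q / d
    rw [hfilter, Finset.sum_singleton]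
  have hexistsQ : ∀ i : Fin d, ∃ q ∈ Q, q % d = i.val := by
    intro i
    have hi : i.val ∈ Q.image (· % d) := by
      rw [hQimg]
      exact Finset.mem_range.2 i.isLt
    obtain ⟨q, hq, hqe⟩ := Finset.mem_image.1 hi
    exact ⟨q, hq, hqe⟩
  have hptsg : pts d (gOp d j x) = Q := by
    apply Finset.eq_of_subset_of_card_le
    · intro p hp
      obtain ⟨i, rfl⟩ := mem_pts.1 hp
      obtain ⟨q, hq, hqe⟩ := hexistsQ i
      rw [hgval i q hq hqe]
      have hqq : q / d * d + i.val = q := by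
        have h1 := Nat.div_add_mod q d
        have h2 : q / d * d = d * (q / d) := mul_comm _ _
        omega
      rw [hqq]
      exact hq
    · rw [card_pts, hQcard]
  -- sum of gaps
  have himgT : B.image (fun b => tIdx b % S.card) = Finset.range S.card := by
    apply Finset.eq_of_subset_of_card_le
    · intro r hr
      obtain ⟨b, hb, rfl⟩ := Finset.mem_image.1 hr
      exact Finset.mem_range.2 (Nat.mod_lt _ (m_pos hSne))
    · rw [Finset.card_range, Finset.card_image_of_injOn (fun p hp q hq h =>
        htmodinj p (List.mem_toFinset.1 hp) q (List.mem_toFinset.1 hq) h), hBcard, hScard]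
  have hgapsum : ∑ b ∈ B, gap b = d := by
    have h1 : ∀ b ∈ B, gap b
        = cseq d S (tIdx b % S.card + 1) - cseq d S (tIdx b % S.card) := by
      intro b hb
      simp only [hgapdef]
      exact cseq_gap_mod hSne (tIdx b)
    rw [Finset.sum_congr rfl h1]
    have h2 : ∑ b ∈ B, (cseq d S (tIdx b % S.card + 1) - cseq d S (tIdx b % S.card))
        = ∑ k ∈ Finset.range S.card, (cseq d S (k + 1) - cseq d S k) := by
      rw [← himgT, Finset.sum_image (fun p hp q hq h =>
        htmodinj p (List.mem_toFinset.1 hp) q (List.mem_toFinset.1 hq) h)]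
    rw [h2]
    exact cseq_gap_sum hSne hSd
  have hsumN : ∑ n ∈ N, n = (∑ b ∈ B, b) + d := by
    rw [hNdef, Finset.sum_image (fun p hp q hq h => hnextinj p hp q hq h)]
    rw [Finset.sum_congr rfl (fun b hb => hnextgap b (List.mem_toFinset.1 hb)),
      Finset.sum_add_distrib, hgapsum]
  have hlowltB : ∀ a ∈ low.toFinset, ∀ b ∈ B, a < b := fun a ha b hb =>
    hAB a (List.mem_toFinset.1 ha) b (List.mem_toFinset.1 hb)
  have hdisjLB : Disjoint low.toFinset B := by
    rw [Finset.disjoint_left]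
    intro a ha hB
    exact lt_irrefl a (hlowltB a ha a hB)
  have hptseq : pts d x = low.toFinset ∪ B := by
    rw [← hLfin, ← happ, List.toFinset_append, hBdef]
  have hsumQ : ∑ q ∈ Q, q = (∑ q ∈ pts d x, q) + d := by
    rw [hQeq, Finset.sum_union hdisjQ, hptseq, Finset.sum_union hdisjLB, hsumN]
    ring
  have hsize : size (gOp d j x) = size x + 1 := by
    have e1 := sizeSet_mul hd hQmodinj hQimg
    have e2 := sizeSet_mul hd (fun p hp q hq h => pts_mod_inj hp hq h) (pts_mod_image hd x)
    have e3 : sizeSet d Q = sizeSet d (pts d x) + 1 := by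
      have h4 : d * sizeSet d Q = d * (sizeSet d (pts d x) + 1) := by
        rw [Nat.mul_add, Nat.mul_one]
        omega
      exact Nat.eq_of_mul_eq_mul_left hd h4
    rw [size_eq, hptsg, e3, ← size_eq]
  have hwN : wSet d N = wSet d B := by
    rw [hNdef, wSet, Finset.sum_image (fun p hp q hq h => hnextinj p hp q hq h)]
    rw [Finset.sum_congr rfl (fun p _ =>
      Finset.sum_image (fun p hp q hq h => hnextinj p hp q hq h))]
    rw [wSet]
    refine Finset.sum_congr rfl fun p hp => Finset.sum_congr rfl fun q hq => ?_
    have hph := List.mem_toFinset.1 hp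
    have hqh := List.mem_toFinset.1 hq
    rw [hnext p hph, hnext q hqh]
    by_cases hlt : p < q
    · have htlt : tIdx p < tIdx q := (horder p hph q hqh).2 hlt
      rw [if_pos (hmono (by omega : tIdx p + 1 < tIdx q + 1)), if_pos hlt]
      have d1 := cseq_div_diff hSne hSd (t := tIdx p + 1) (u := tIdx q + 1) (by omega)
      have d2 := cseq_div_diff hSne hSd (t := tIdx p) (u := tIdx q) (by omega)
      rw [htIdx p hph, htIdx q hqh] at d2
      rw [d1, d2]
      congr 1
      omega
    · have htle : tIdx q ≤ tIdx p := by
        by_contra hc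
        push_neg at hc
        exact hlt ((horder p hph q hqh).1 hc)
      rw [if_neg (not_lt.2 (hmono.monotone (by omega : tIdx q + 1 ≤ tIdx p + 1))),
        if_neg hlt]
  have hW2 : ∀ a ∈ low.toFinset,
      (∑ n ∈ N, (n - a) / d) = (∑ b ∈ B, (b - a) / d) + 1 := by
    intro a haf
    have ha := List.mem_toFinset.1 haf
    have haQlt : ∀ b ∈ high, a < b := hAB a ha
    have hρinj : ∀ b ∈ B, ∀ b' ∈ B, (b - a) % d = (b' - a) % d → b = b' := by
      intro b hb b' hb' h
      have hbh := List.mem_toFinset.1 hb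
      have hb'h := List.mem_toFinset.1 hb'
      have h1 : b % d = b' % d := by
        have h2 := Nat.ModEq.add_right a h
        rwa [Nat.sub_add_cancel (haQlt b hbh).le, Nat.sub_add_cancel (haQlt b' hb'h).le] at h2
      exact hBmodinj b hbh b' hb'h h1
    have hBne : B.Nonempty := by
      obtain ⟨b, hb⟩ := List.exists_mem_of_ne_nil high hhighne
      exact ⟨b, List.mem_toFinset.2 hb⟩
    set R : Finset ℕ := B.image (fun b => (b - a) % d) with hRdef
    have hRne : R.Nonempty := hBne.image _
    set rmax : ℕ := R.max' hRne with hrmaxdef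
    obtain ⟨bm, hbm, hbmr0⟩ := Finset.mem_image.1 (R.max'_mem hRne)
    have hbmr : (bm - a) % d = rmax := by rw [hrmaxdef]; exact hbmr0
    have hbmh : bm ∈ high := List.mem_toFinset.1 hbm
    have hrlt : rmax < d := by
      rw [← hbmr]
      exact Nat.mod_lt _ hd
    have hkey : ∀ b ∈ B, (nextPt d S b - a) / d
        = (b - a) / d + (if (b - a) % d = rmax then 1 else 0) := by
      intro b hb
      have hbh := List.mem_toFinset.1 hb
      have hab : a < b := haQlt b hbh
      have hng := hnextgap b hbh
      have hg1 := hgap1 b hbh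
      have hgd := hgapd b hbh
      have hdm := Nat.div_add_mod (b - a) d
      have hmlt : (b - a) % d < d := Nat.mod_lt _ hd
      by_cases hmax : (b - a) % d = rmax
      · rw [if_pos hmax]
        have hge : d - (b - a) % d ≤ gap b := by
          by_contra hc
          push_neg at hc
          have hmem : (b + gap b) % d ∈ S := by
            have h5 : nextPt d S b % d ∈ S := by
              rw [hnext b hbh]
              exact cseq_mod_mem hSne hSd _
            rwa [hng] at h5
          obtain ⟨b', hb'h, hb'd⟩ := hSsurj _ hmem
          have hab' : a < b' := haQlt b' hb'h
          have h1 : (b' - a) % d = (b + gap b - a) % d := by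
            have h2 := Nat.ModEq.add_right_cancel' a (show b' - a + a ≡ (b + gap b - a) + a [MOD d] from by
              rw [Nat.sub_add_cancel hab'.le, Nat.sub_add_cancel (by omega : a ≤ b + gap b)]
              exact hb'd)
            exact h2
          have h2 : (b + gap b - a) % d = (b - a) % d + gap b := by
            have e1 : b + gap b - a = d * ((b - a) / d) + ((b - a) % d + gap b) := by omega
            rw [e1, Nat.mul_add_mod, Nat.mod_eq_of_lt (by omega)]
          have hmemR : (b - a) % d + gap b ∈ R := by
            rw [← h2, ← h1]
            exact Finset.mem_image.2 ⟨b', List.mem_toFinset.2 hb'h, rfl⟩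
          have h3 := R.le_max' _ hmemR
          rw [← hrmaxdef] at h3
          omega
        have hsplit : nextPt d S b - a = d * ((b - a) / d) + ((b - a) % d + gap b) := by omega
        rw [hsplit, Nat.mul_add_div hd]
        have hone : ((b - a) % d + gap b) / d = 1 := by
          have e2 : (b - a) % d + gap b = d * 1 + ((b - a) % d + gap b - d) := by omega
          rw [e2, Nat.mul_add_div hd,
            Nat.div_eq_of_lt (show (b - a) % d + gap b - d < d by omega)]
        rw [hone]
      · rw [if_neg hmax]
        have hmemRb : (b - a) % d ∈ R := Finset.mem_image.2 ⟨b, hb, rfl⟩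
        have hltr : (b - a) % d < rmax :=
          lt_of_le_of_ne (by rw [hrmaxdef]; exact R.le_max' _ hmemRb) hmax
        have hs : gap b ≤ rmax - (b - a) % d := by
          have hs0 : 0 < rmax - (b - a) % d := by omega
          have hdmm := Nat.div_add_mod (bm - a) d
          have h1 : (b + (rmax - (b - a) % d) - a) % d = (bm - a) % d := by
            have e1 : b + (rmax - (b - a) % d) - a
                = d * ((b - a) / d) + ((b - a) % d + (rmax - (b - a) % d)) := by omega
            rw [e1, Nat.mul_add_mod, Nat.mod_eq_of_lt (by omega)]
            omega
          have h2 : (b + (rmax - (b - a) % d)) % d = bm % d := by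
            have h3 := Nat.ModEq.add_right a h1
            rwa [Nat.sub_add_cancel (by omega : a ≤ b + (rmax - (b - a) % d)),
              Nat.sub_add_cancel (haQlt bm hbmh).le] at h3
          have hmem : (b + (rmax - (b - a) % d)) % d ∈ S := by
            rw [h2]
            exact hmodS bm hbmh
          have hle : nextPt d S b ≤ b + (rmax - (b - a) % d) :=
            Nat.sInf_le ⟨by omega, hmem⟩
          have hle2 : b + gap b ≤ b + (rmax - (b - a) % d) := by
            rw [← hng]
            exact hle
          omega
        have hsplit : nextPt d S b - a = d * ((b - a) / d) + ((b - a) % d + gap b) := by omega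
        rw [hsplit, Nat.mul_add_div hd,
          Nat.div_eq_of_lt (show (b - a) % d + gap b < d by omega)]
    rw [hNdef, Finset.sum_image (fun p hp q hq h => hnextinj p hp q hq h)]
    rw [Finset.sum_congr rfl hkey, Finset.sum_add_distrib]
    congr 1
    have hfilt : B.filter (fun b => (b - a) % d = rmax) = {bm} := by
      ext b
      simp only [Finset.mem_filter, Finset.mem_singleton]
      constructor
      · rintro ⟨hb, hbr⟩
        exact hρinj b hb bm hbm (by rw [hbr, hbmr])
      · rintro rfl
        exact ⟨hbm, hbmr⟩
    calc ∑ b ∈ B, (if (b - a) % d = rmax then 1 else 0)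
        = ∑ b ∈ B.filter (fun b => (b - a) % d = rmax), 1 := (Finset.sum_filter _ _).symm
      _ = 1 := by rw [hfilt, Finset.sum_singleton]
  have hwQ : wSet d Q = wSet d (pts d x) + (j - 1) := by
    rw [hQeq, wSet_union_of_lt hlowltN, hptseq, wSet_union_of_lt hlowltB, hwN]
    have h2 : ∑ a ∈ low.toFinset, ∑ n ∈ N, (n - a) / d
        = (∑ a ∈ low.toFinset, ∑ b ∈ B, (b - a) / d) + (j - 1) := by
      rw [Finset.sum_congr rfl hW2, Finset.sum_add_distrib, Finset.sum_const, hlowcard,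
        smul_eq_mul, mul_one]
    omega
  have hweight : weight (gOp d j x) = weight x + (j - 1) := by
    rw [weight_eq, hptsg, hwQ, ← weight_eq]
  exact ⟨hsize, hweight⟩



end Core

end SpiralAux


open Spiral in
/-- For every `a = (a₁,…,a_d) ∈ ℕ^d` and every `x ∈ ℕ^d`, the composite
`g^a := g₁^{a₁} ∘ ⋯ ∘ g_d^{a_d}` satisfies `n(g^a(x)) = n(x) + (a₁ + ⋯ + a_d)` and
`W(g^a(x)) = W(x) + (0·a₁ + 1·a₂ + ⋯ + (d−1)·a_d)` (in the 0-indexed exponent vector,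
`a i` is the exponent of `g_{i+1}`, contributing `i·(a i)` to the weight). -/
theorem statement16 (d : ℕ) (hd : 1 ≤ d) (a : Fin d → ℕ) (x : Fin d → ℕ) :
    size (gIter d a x) = size x + ∑ i, a i ∧
    weight (gIter d a x) = weight x + ∑ i : Fin d, i.val * a i := by
  classical
  have hiter : ∀ (k : Fin d) (n : ℕ) (y : Fin d → ℕ),
      size ((gOp d (k.val + 1))^[n] y) = size y + n ∧
      weight ((gOp d (k.val + 1))^[n] y) = weight y + n * k.val := by
    intro k n
    induction n with
    | zero => intro y; simp
    | succ n ih =>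
        intro y
        rw [Function.iterate_succ_apply']
        obtain ⟨h1, h2⟩ := SpiralAux.gOp_spec d ((gOp d (k.val + 1))^[n] y) (k.val + 1)
          (by omega) (by omega : k.val + 1 ≤ d)
        obtain ⟨ih1, ih2⟩ := ih y
        constructor
        · rw [h1, ih1]
          omega
        · rw [h2, ih2]
          have hm : (n + 1) * k.val = n * k.val + k.val := by ring
          have hs : k.val + 1 - 1 = k.val := by omega
          omega
  have hfold : ∀ (l : List (Fin d)) (y : Fin d → ℕ),
      size (l.foldr (fun j y => (gOp d (j.val + 1))^[a j] y) y)
        = size y + (l.map a).sum ∧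
      weight (l.foldr (fun j y => (gOp d (j.val + 1))^[a j] y) y)
        = weight y + (l.map (fun j => j.val * a j)).sum := by
    intro l
    induction l with
    | nil => intro y; simp
    | cons k l ih =>
        intro y
        simp only [List.foldr_cons, List.map_cons, List.sum_cons]
        obtain ⟨h1, h2⟩ :=
          hiter k (a k) (l.foldr (fun j y => (gOp d (j.val + 1))^[a j] y) y)
        obtain ⟨ih1, ih2⟩ := ih y
        constructor
        · rw [h1, ih1]
          omega
        · rw [h2, ih2]
          have hm : a k * k.val = k.val * a k := mul_comm _ _
          omega
  obtain ⟨h1, h2⟩ := hfold (List.finRange d) x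
  have hg : gIter d a x = (List.finRange d).foldr (fun j y => (gOp d (j.val + 1))^[a j] y) x :=
    rfl
  constructor
  · rw [hg, h1, Fin.sum_univ_def]
  · rw [hg, h2, Fin.sum_univ_def]
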